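/- (Propagation of infinite visitation along positive-probability transitions.) Let s, s' ∈ S with P s s' > 0, and let s0 ∈ S. Then for μ_{s0}-almost every trajectory ω, if ω visits {s} infinitely often then ω visits {s'} infinitely often. -/

import Mathlib

open MeasureTheory Finset Set
open scoped Classical

/-- `μ` is the path measure of the time-homogeneous Markov chain with transition
matrix `P` started at `s0`: it assigns to each finite cylinder the product of
transition probabilities. -/
def IsPathMeasure {S : Type*} [Fintype S] [DecidableEq S] [MeasurableSpace S]
    (P : S → S → ℝ) (s0 : S) (μ : Measure (ℕ → S)) : Prop :=
  ∀ (n : ℕ) (f : ℕ → S),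
    μ {ω | ∀ i ≤ n, ω i = f i} =
      if f 0 = s0 then ENNReal.ofReal (∏ i ∈ Finset.range n, P (f i) (f (i + 1))) else 0

/-- `s'` is accessible from `s`: some matrix power of `P` has positive `(s, s')` entry. -/
def Accessible {S : Type*} [Fintype S] [DecidableEq S] (P : S → S → ℝ) (s s' : S) : Prop :=
  ∃ n : ℕ, 0 < ((Matrix.of P) ^ n) s s'

/-- `C` is a closed set of the chain: from any state of `C`, the chain stays in `C`. -/
def IsClosedSet {S : Type*} [Fintype S] (P : S → S → ℝ) (C : Set S) : Prop :=
  ∀ s ∈ C, ∑ s' ∈ Finset.univ.filter (· ∈ C), P s s' = 1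

/-- A closed communicating class: a nonempty closed set all of whose states
communicate with each other. -/
def IsCCC {S : Type*} [Fintype S] [DecidableEq S] (P : S → S → ℝ) (C : Set S) : Prop :=
  C.Nonempty ∧ IsClosedSet P C ∧ ∀ s ∈ C, ∀ s' ∈ C, Accessible P s s'

set_option linter.unusedSectionVars false

section Aux
variable {S : Type*} [Fintype S] [Nonempty S] [DecidableEq S]
    [MeasurableSpace S] [MeasurableSingletonClass S]
variable {P : S → S → ℝ} {s0 : S} {μ : Measure (ℕ → S)}

/-- cylinder -/
def MyCyl (j : ℕ) (f : ℕ → S) : Set (ℕ → S) := {ω | ∀ i ≤ j, ω i = f i}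

lemma myCyl_measurable (j : ℕ) (f : ℕ → S) : MeasurableSet (MyCyl j f) := by
  have : MyCyl j f = ⋂ i ∈ Finset.range (j+1), (fun ω : ℕ → S => ω i) ⁻¹' {f i} := by
    ext ω; simp [MyCyl, Nat.lt_succ_iff]
  rw [this]
  exact Finset.measurableSet_biInter _ fun i _ =>
    (measurable_pi_apply i) (measurableSet_singleton _)

lemma coord_measurable (j : ℕ) (t : S) : MeasurableSet {ω : ℕ → S | ω j = t} :=
  (measurable_pi_apply j) (measurableSet_singleton _)

lemma cyl_extend (hP0 : ∀ s s', 0 ≤ P s s') (hμ : IsPathMeasure P s0 μ)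
    (j : ℕ) (f : ℕ → S) (t : S) :
    μ (MyCyl j f ∩ {ω | ω (j+1) = t}) = μ (MyCyl j f) * ENNReal.ofReal (P (f j) t) := by
  set g : ℕ → S := fun i => if i ≤ j then f i else t with hg
  have h1 : MyCyl j f ∩ {ω | ω (j+1) = t} = MyCyl (j+1) g := by
    ext ω
    constructor
    · rintro ⟨h, ht⟩ i hi
      by_cases hij : i ≤ j
      · simp only [hg, if_pos hij]; exact h i hij
      · have hi1 : i = j + 1 := by omega
        simp only [hg, if_neg hij, hi1]
        subst hi1
        simpa using ht
    · intro h
      refine ⟨fun i hi => ?_, ?_⟩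
      · have := h i (by omega)
        simpa [hg, hi] using this
      · have := h (j+1) le_rfl
        simpa [hg] using this
  have hg0 : g 0 = f 0 := by simp [hg]
  have hprod : ∏ i ∈ Finset.range (j+1), P (g i) (g (i+1))
      = (∏ i ∈ Finset.range j, P (f i) (f (i+1))) * P (f j) t := by
    rw [Finset.prod_range_succ]
    congr 1
    · exact Finset.prod_congr rfl fun i hi => by
        simp only [Finset.mem_range] at hi
        simp [hg, Nat.le_of_lt hi, Nat.succ_le_of_lt hi]
    · simp [hg]
  have hμ1 := hμ (j+1) g
  have hμ0 := hμ j f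
  rw [h1]
  show μ {ω | ∀ i ≤ j+1, ω i = g i} = μ {ω | ∀ i ≤ j, ω i = f i} * _
  rw [hμ1, hμ0, hg0]
  by_cases h0 : f 0 = s0
  · simp only [h0, if_pos rfl, hprod]
    rw [ENNReal.ofReal_mul' (hP0 _ _)]
    simp
  · simp [h0]
end Aux

section Aux3
variable {S : Type*} [Fintype S] [Nonempty S] [DecidableEq S]
    [MeasurableSpace S] [MeasurableSingletonClass S]
variable {P : S → S → ℝ} {s0 : S} {μ : Measure (ℕ → S)}

/-- extend a finite prefix to a full trajectory -/
def myExt (j : ℕ) (g : Fin (j+1) → S) : ℕ → S :=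
  fun i => if h : i < j+1 then g ⟨i, h⟩ else g 0

lemma cyl_decomp (j : ℕ) (A : Set (ℕ → S))
    (hdet : ∀ ω ω' : ℕ → S, (∀ i ≤ j, ω i = ω' i) → ω ∈ A → ω' ∈ A) :
    A = ⋃ g ∈ Finset.univ.filter (fun g : Fin (j+1) → S => myExt j g ∈ A),
        MyCyl j (myExt j g) := by
  ext ω
  simp only [Set.mem_iUnion, Finset.mem_filter, Finset.mem_univ, true_and, exists_prop]
  constructor
  · intro hω
    refine ⟨fun i => ω i, ?_, ?_⟩
    · exact hdet ω _ (fun i hi => by simp [myExt, Nat.lt_succ_of_le hi]) hω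
    · intro i hi; simp [myExt, Nat.lt_succ_of_le hi]
  · rintro ⟨g, hg, hcyl⟩
    exact hdet (myExt j g) ω (fun i hi => (hcyl i hi).symm) hg

lemma cyl_disjoint (j : ℕ) (g1 g2 : Fin (j+1) → S) (h : g1 ≠ g2) :
    Disjoint (MyCyl j (myExt j g1)) (MyCyl j (myExt j g2)) := by
  rw [Set.disjoint_left]
  intro ω h1 h2
  apply h
  funext i
  have e1 := h1 i.1 (Nat.lt_succ_iff.mp i.2)
  have e2 := h2 i.1 (Nat.lt_succ_iff.mp i.2)
  simp only [myExt, dif_pos i.2] at e1 e2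
  rw [← Fin.eta i i.2]
  rw [← e1, ← e2]

lemma measurable_of_det (j : ℕ) (A : Set (ℕ → S))
    (hdet : ∀ ω ω' : ℕ → S, (∀ i ≤ j, ω i = ω' i) → ω ∈ A → ω' ∈ A) :
    MeasurableSet A := by
  rw [cyl_decomp j A hdet]
  exact Finset.measurableSet_biUnion _ fun g _ => myCyl_measurable _ _

lemma key_step (hP0 : ∀ s s', 0 ≤ P s s') (hP1 : ∀ s, ∑ s', P s s' = 1)
    (hμ : IsPathMeasure P s0 μ) (s s' : S) (j : ℕ) (A : Set (ℕ → S))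
    (hdet : ∀ ω ω' : ℕ → S, (∀ i ≤ j, ω i = ω' i) → ω ∈ A → ω' ∈ A)
    (hsub : ∀ ω ∈ A, ω j = s) :
    μ (A ∩ {ω | ω (j+1) ≠ s'}) = ENNReal.ofReal (1 - P s s') * μ A := by
  have cylcase : ∀ f : ℕ → S, f j = s →
      μ (MyCyl j f ∩ {ω | ω (j+1) ≠ s'}) = ENNReal.ofReal (1 - P s s') * μ (MyCyl j f) := by
    intro f hf
    have hsplit : MyCyl j f ∩ {ω | ω (j+1) ≠ s'}
        = ⋃ t ∈ Finset.univ.erase s', MyCyl j f ∩ {ω | ω (j+1) = t} := by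
      ext ω
      simp only [Set.mem_inter_iff, Set.mem_setOf_eq, Set.mem_iUnion,
        Finset.mem_erase, Finset.mem_univ, and_true, exists_prop]
      constructor
      · rintro ⟨hc, hne⟩; exact ⟨ω (j+1), hne, hc, rfl⟩
      · rintro ⟨t, hne, hc, ht⟩; exact ⟨hc, ht ▸ hne⟩
    rw [hsplit, measure_biUnion_finset ?_ ?_]
    · have : ∀ t ∈ Finset.univ.erase s',
          μ (MyCyl j f ∩ {ω | ω (j+1) = t}) = μ (MyCyl j f) * ENNReal.ofReal (P s t) := by
        intro t _
        rw [cyl_extend hP0 hμ, hf]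
      rw [Finset.sum_congr rfl this, ← Finset.mul_sum,
        ← ENNReal.ofReal_sum_of_nonneg (fun t _ => hP0 s t)]
      have hsum : ∑ t ∈ Finset.univ.erase s', P s t = 1 - P s s' := by
        have := Finset.add_sum_erase Finset.univ (P s) (Finset.mem_univ s')
        have h1 := hP1 s
        linarith
      rw [hsum, mul_comm]
    · intro t1 h1 t2 h2 hne
      simp only [Function.onFun]
      apply Set.disjoint_left.mpr
      rintro ω ⟨_, e1⟩ ⟨_, e2⟩
      exact hne (e1.symm.trans e2)
    · exact fun t _ => (myCyl_measurable j f).inter (coord_measurable (j+1) t)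
  have hdisj : (↑(Finset.univ.filter (fun g : Fin (j+1) → S => myExt j g ∈ A)) :
      Set (Fin (j+1) → S)).PairwiseDisjoint (fun g => MyCyl j (myExt j g)) :=
    fun g1 _ g2 _ hne => cyl_disjoint j g1 g2 hne
  have hdisj2 : (↑(Finset.univ.filter (fun g : Fin (j+1) → S => myExt j g ∈ A)) :
      Set (Fin (j+1) → S)).PairwiseDisjoint
        (fun g => MyCyl j (myExt j g) ∩ {ω | ω (j+1) ≠ s'}) :=
    fun g1 h1 g2 h2 hne => Disjoint.mono Set.inter_subset_left Set.inter_subset_left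
      (cyl_disjoint j g1 g2 hne)
  rw [cyl_decomp j A hdet, Set.iUnion₂_inter,
    measure_biUnion_finset hdisj2
      (fun g _ => (myCyl_measurable _ _).inter ((coord_measurable (j+1) s').compl)),
    measure_biUnion_finset hdisj (fun g _ => myCyl_measurable _ _), Finset.mul_sum]
  refine Finset.sum_congr rfl fun g hg => ?_
  have hgA : myExt j g ∈ A := (Finset.mem_filter.mp hg).2
  have : myExt j g j = s := hsub _ hgA
  exact cylcase (myExt j g) this
end Aux3

section Aux4
variable {S : Type*} [Fintype S] [Nonempty S] [DecidableEq S]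
    [MeasurableSpace S] [MeasurableSingletonClass S]
variable {P : S → S → ℝ} {s0 : S} {μ : Measure (ℕ → S)}

/-- number of visits to `s` at times in `[N, j)` -/
def myVisits (s : S) (N j : ℕ) (ω : ℕ → S) : ℕ :=
  ((Finset.Ico N j).filter (fun n => ω n = s)).card

/-- every visit to `s` in `[N, j)` is followed by a non-`s'` state -/
def myAllFail (s s' : S) (N j : ℕ) (ω : ℕ → S) : Prop :=
  ∀ n ∈ Finset.Ico N j, ω n = s → ω (n+1) ≠ s'

/-- the `(k+1)`-st visit to `s` after `N` happens at time `j`, and all visits in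
`[N, j)` were failures -/
def myW (s s' : S) (N k j : ℕ) : Set (ℕ → S) :=
  {ω | N ≤ j ∧ ω j = s ∧ myVisits s N j ω = k ∧ myAllFail s s' N j ω}

/-- the `(k+1)`-st visit to `s` after `N` happens and the first `k+1` visits all fail -/
def myD (s s' : S) (N k : ℕ) : Set (ℕ → S) :=
  ⋃ j, (myW s s' N k j ∩ {ω | ω (j+1) ≠ s'})

lemma myW_det (s s' : S) (N k j : ℕ) (ω ω' : ℕ → S) (h : ∀ i ≤ j, ω i = ω' i)
    (hω : ω ∈ myW s s' N k j) : ω' ∈ myW s s' N k j := by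
  obtain ⟨hN, hs, hv, hf⟩ := hω
  refine ⟨hN, (h j le_rfl) ▸ hs, ?_, ?_⟩
  · rw [← hv]
    unfold myVisits
    apply congrArg
    apply Finset.filter_congr
    intro n hn
    rw [Finset.mem_Ico] at hn
    rw [h n (le_of_lt hn.2)]
  · intro n hn hsn
    rw [Finset.mem_Ico] at hn
    rw [← h n (le_of_lt hn.2)] at hsn
    rw [← h (n+1) hn.2]
    exact hf n (Finset.mem_Ico.mpr hn) hsn

lemma myW_sub (s s' : S) (N k j : ℕ) (ω : ℕ → S) (hω : ω ∈ myW s s' N k j) : ω j = s :=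
  hω.2.1

lemma myW_measurable (s s' : S) (N k j : ℕ) : MeasurableSet (myW s s' N k j) :=
  measurable_of_det j _ (myW_det s s' N k j)

/-- visit counts force the visit time: `myW` at the same `k` are disjoint over `j`. -/
lemma myW_disjoint (s s' : S) (N k : ℕ) {j1 j2 : ℕ} (h : j1 ≠ j2) :
    Disjoint (myW s s' N k j1) (myW s s' N k j2) := by
  wlog hlt : j1 < j2 generalizing j1 j2
  · exact (this h.symm (by omega)).symm
  rw [Set.disjoint_left]
  rintro ω ⟨hN1, hs1, hv1, _⟩ ⟨hN2, hs2, hv2, _⟩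
  have hsplit : Finset.Ico N j2 = Finset.Ico N j1 ∪ Finset.Ico j1 j2 :=
    (Finset.Ico_union_Ico_eq_Ico hN1 (le_of_lt hlt)).symm
  have hdisj : Disjoint (Finset.Ico N j1) (Finset.Ico j1 j2) := by
    apply Finset.disjoint_left.mpr
    intro n hn1 hn2
    rw [Finset.mem_Ico] at hn1 hn2
    omega
  have : myVisits s N j2 ω = myVisits s N j1 ω
      + ((Finset.Ico j1 j2).filter (fun n => ω n = s)).card := by
    unfold myVisits
    rw [hsplit, Finset.filter_union, Finset.card_union_of_disjoint
      (Finset.disjoint_filter_filter hdisj)]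
  have hj1mem : j1 ∈ (Finset.Ico j1 j2).filter (fun n => ω n = s) := by
    simp [Finset.mem_Ico, hlt, hs1]
  have : 1 ≤ ((Finset.Ico j1 j2).filter (fun n => ω n = s)).card :=
    Finset.card_pos.mpr ⟨j1, hj1mem⟩
  omega
end Aux4

section Aux5
variable {S : Type*} [Fintype S] [Nonempty S] [DecidableEq S]
    [MeasurableSpace S] [MeasurableSingletonClass S]
variable {P : S → S → ℝ} {s0 : S} {μ : Measure (ℕ → S)}

lemma myW_sub_myD (s s' : S) (N k j : ℕ) : myW s s' N (k+1) j ⊆ myD s s' N k := by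
  rintro ω ⟨hN, hs, hv, hf⟩
  set F := (Finset.Ico N j).filter (fun n => ω n = s) with hF
  have hFne : F.Nonempty := Finset.card_pos.mp (by rw [hF] at *; unfold myVisits at hv; omega)
  set j' := F.max' hFne with hj'
  have hj'F : j' ∈ F := F.max'_mem hFne
  have hj'mem : (N ≤ j' ∧ j' < j) ∧ ω j' = s := by
    have := hj'F; rw [hF, Finset.mem_filter, Finset.mem_Ico] at this; exact this
  have hsplit : Finset.Ico N j = Finset.Ico N j' ∪ Finset.Ico j' j :=
    (Finset.Ico_union_Ico_eq_Ico hj'mem.1.1 (le_of_lt hj'mem.1.2)).symm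
  have hdisj : Disjoint (Finset.Ico N j') (Finset.Ico j' j) := by
    apply Finset.disjoint_left.mpr
    intro n hn1 hn2
    rw [Finset.mem_Ico] at hn1 hn2
    omega
  have htail : (Finset.Ico j' j).filter (fun n => ω n = s) = {j'} := by
    ext n
    simp only [Finset.mem_filter, Finset.mem_Ico, Finset.mem_singleton]
    constructor
    · rintro ⟨⟨h1, h2⟩, h3⟩
      have : n ∈ F := by
        rw [hF, Finset.mem_filter, Finset.mem_Ico]
        exact ⟨⟨le_trans hj'mem.1.1 h1, h2⟩, h3⟩
      have := F.le_max' n this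
      omega
    · rintro rfl
      exact ⟨⟨le_rfl, hj'mem.1.2⟩, hj'mem.2⟩
  have hcount : myVisits s N j' ω = k := by
    have : myVisits s N j ω = myVisits s N j' ω
        + ((Finset.Ico j' j).filter (fun n => ω n = s)).card := by
      unfold myVisits
      rw [hsplit, Finset.filter_union, Finset.card_union_of_disjoint
        (Finset.disjoint_filter_filter hdisj)]
    rw [htail] at this
    simp at this
    omega
  have hfail' : ω (j' + 1) ≠ s' :=
    hf j' (Finset.mem_Ico.mpr hj'mem.1) hj'mem.2
  refine Set.mem_iUnion.mpr ⟨j', ⟨⟨hj'mem.1.1, hj'mem.2, hcount, ?_⟩, hfail'⟩⟩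
  intro n hn hns
  rw [Finset.mem_Ico] at hn
  exact hf n (Finset.mem_Ico.mpr ⟨hn.1, lt_trans hn.2 hj'mem.1.2⟩) hns

lemma myD_step (hP0 : ∀ s s', 0 ≤ P s s') (hP1 : ∀ s, ∑ s', P s s' = 1)
    (hμ : IsPathMeasure P s0 μ) (s s' : S) (N k : ℕ) :
    μ (myD s s' N k) = ENNReal.ofReal (1 - P s s') * μ (⋃ j, myW s s' N k j) := by
  have h1 : Pairwise (Function.onFun Disjoint
      (fun j => myW s s' N k j ∩ {ω : ℕ → S | ω (j+1) ≠ s'})) :=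
    fun j1 j2 h => (myW_disjoint s s' N k h).mono
      Set.inter_subset_left Set.inter_subset_left
  have h2 : Pairwise (Function.onFun Disjoint (fun j => myW s s' N k j)) :=
    fun j1 j2 h => myW_disjoint s s' N k h
  rw [myD, measure_iUnion h1 (fun j => (myW_measurable s s' N k j).inter
      ((coord_measurable (j+1) s').compl)),
    measure_iUnion h2 (fun j => myW_measurable s s' N k j), ← ENNReal.tsum_mul_left]
  exact tsum_congr fun j => key_step hP0 hP1 hμ s s' j _
    (myW_det s s' N k j) (myW_sub s s' N k j)

lemma myD_bound (hP0 : ∀ s s', 0 ≤ P s s') (hP1 : ∀ s, ∑ s', P s s' = 1)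
    (hμ : IsPathMeasure P s0 μ) [IsProbabilityMeasure μ] (s s' : S) (N : ℕ) :
    ∀ k, μ (myD s s' N k) ≤ ENNReal.ofReal (1 - P s s') ^ (k+1) := by
  intro k
  induction k with
  | zero =>
    rw [myD_step hP0 hP1 hμ, pow_one]
    calc ENNReal.ofReal (1 - P s s') * μ (⋃ j, myW s s' N 0 j)
        ≤ ENNReal.ofReal (1 - P s s') * 1 := by
          exact mul_le_mul_right prob_le_one _
      _ = ENNReal.ofReal (1 - P s s') := mul_one _
  | succ k ih =>
    rw [myD_step hP0 hP1 hμ]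
    have hsub : (⋃ j, myW s s' N (k+1) j) ⊆ myD s s' N k :=
      Set.iUnion_subset fun j => myW_sub_myD s s' N k j
    calc ENNReal.ofReal (1 - P s s') * μ (⋃ j, myW s s' N (k+1) j)
        ≤ ENNReal.ofReal (1 - P s s') * μ (myD s s' N k) :=
          mul_le_mul_right (measure_mono hsub) _
      _ ≤ ENNReal.ofReal (1 - P s s') * ENNReal.ofReal (1 - P s s') ^ (k+1) :=
          mul_le_mul_right ih _
      _ = ENNReal.ofReal (1 - P s s') ^ (k+2) := by ring

lemma myD_inter_null (hP0 : ∀ s s', 0 ≤ P s s') (hP1 : ∀ s, ∑ s', P s s' = 1)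
    (hμ : IsPathMeasure P s0 μ) [IsProbabilityMeasure μ] (s s' : S)
    (hpos : 0 < P s s') (N : ℕ) :
    μ (⋂ k, myD s s' N k) = 0 := by
  have hple : P s s' ≤ 1 := by
    have h1 := hP1 s
    have h2 := Finset.single_le_sum (f := P s) (fun t _ => hP0 s t) (Finset.mem_univ s')
    linarith
  have hq : ENNReal.ofReal (1 - P s s') < 1 := by
    rw [← ENNReal.ofReal_one]
    exact ENNReal.ofReal_lt_ofReal_iff_of_nonneg (by linarith) |>.mpr (by linarith)
  have htend : Filter.Tendsto (fun k : ℕ => ENNReal.ofReal (1 - P s s') ^ (k+1))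
      Filter.atTop (nhds 0) :=
    (ENNReal.tendsto_pow_atTop_nhds_zero_of_lt_one hq).comp (Filter.tendsto_add_atTop_nat 1)
  have hle : μ (⋂ k, myD s s' N k) ≤ 0 :=
    ge_of_tendsto' htend fun k =>
      le_trans (measure_mono (Set.iInter_subset _ k)) (myD_bound hP0 hP1 hμ s s' N k)
  exact le_antisymm hle zero_le
end Aux5

section Aux6
variable {S : Type*} [Fintype S] [Nonempty S] [DecidableEq S]
    [MeasurableSpace S] [MeasurableSingletonClass S]

lemma visits_exists (s : S) (ω : ℕ → S) (hInf : {n | ω n = s}.Infinite) (N : ℕ) :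
    ∀ k, ∃ j, N ≤ j ∧ ω j = s ∧ myVisits s N j ω = k := by
  intro k
  induction k with
  | zero =>
    have hex : ∃ m, N ≤ m ∧ ω m = s := by
      obtain ⟨n, hn, hlt⟩ := hInf.exists_gt N
      exact ⟨n, le_of_lt hlt, hn⟩
    obtain ⟨hN, hs⟩ := Nat.find_spec hex
    refine ⟨Nat.find hex, hN, hs, ?_⟩
    unfold myVisits
    rw [Finset.card_eq_zero, Finset.filter_eq_empty_iff]
    intro n hn
    rw [Finset.mem_Ico] at hn
    intro hns
    exact Nat.find_min hex hn.2 ⟨hn.1, hns⟩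
  | succ k ih =>
    obtain ⟨j, hNj, hjs, hv⟩ := ih
    have hex : ∃ m, j < m ∧ ω m = s := by
      obtain ⟨n, hn, hlt⟩ := hInf.exists_gt j
      exact ⟨n, hlt, hn⟩
    set j' := Nat.find hex with hj'
    obtain ⟨hjj', hj's⟩ := Nat.find_spec hex
    refine ⟨j', le_trans hNj (le_of_lt hjj'), hj's, ?_⟩
    have hsplit : Finset.Ico N j' = Finset.Ico N (j+1) ∪ Finset.Ico (j+1) j' :=
      (Finset.Ico_union_Ico_eq_Ico (by omega) (by omega)).symm
    have hdisj : Disjoint (Finset.Ico N (j+1)) (Finset.Ico (j+1) j') := by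
      apply Finset.disjoint_left.mpr
      intro n h1 h2
      rw [Finset.mem_Ico] at h1 h2
      omega
    have htail : (Finset.Ico (j+1) j').filter (fun n => ω n = s) = ∅ := by
      rw [Finset.filter_eq_empty_iff]
      intro n hn
      rw [Finset.mem_Ico] at hn
      intro hns
      exact Nat.find_min hex (by omega) ⟨by omega, hns⟩
    have hhead : (Finset.Ico N (j+1)).filter (fun n => ω n = s)
        = insert j ((Finset.Ico N j).filter (fun n => ω n = s)) := by
      rw [Nat.Ico_succ_right_eq_insert_Ico hNj, Finset.filter_insert, if_pos hjs]
    unfold myVisits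
    rw [hsplit, Finset.filter_union, Finset.card_union_of_disjoint
      (Finset.disjoint_filter_filter hdisj), htail, hhead, Finset.card_insert_of_notMem
      (by simp [Finset.mem_Ico])]
    unfold myVisits at hv
    simp [hv]

lemma bad_mem_myD (s s' : S) (ω : ℕ → S) (hInf : {n | ω n = s}.Infinite)
    (hFin : ¬ {n | ω n = s'}.Infinite) :
    ∃ N, ∀ k, ω ∈ myD s s' N k := by
  rw [Set.not_infinite] at hFin
  obtain ⟨b, hb⟩ := hFin.bddAbove
  refine ⟨b + 1, fun k => ?_⟩
  have hno : ∀ n, b + 1 ≤ n → ω n ≠ s' := by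
    intro n hn hns
    have := hb hns
    omega
  obtain ⟨j, hNj, hjs, hv⟩ := visits_exists s ω hInf (b+1) k
  refine Set.mem_iUnion.mpr ⟨j, ⟨⟨hNj, hjs, hv, ?_⟩, hno (j+1) (by omega)⟩⟩
  intro n hn _
  rw [Finset.mem_Ico] at hn
  exact hno (n+1) (by omega)
end Aux6


/-- Propagation of infinite visitation along a positive-probability transition:
almost surely, if `s` is visited infinitely often then so is `s'`. -/
theorem infinitely_often_propagates
    {S : Type*} [Fintype S] [Nonempty S] [DecidableEq S]
    [MeasurableSpace S] [MeasurableSingletonClass S]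
    (P : S → S → ℝ) (hP0 : ∀ s s', 0 ≤ P s s') (hP1 : ∀ s, ∑ s', P s s' = 1)
    (s s' : S) (hpos : 0 < P s s')
    (s0 : S) (μ : Measure (ℕ → S)) [IsProbabilityMeasure μ]
    (hμ : IsPathMeasure P s0 μ) :
    ∀ᵐ ω ∂μ, {n | ω n = s}.Infinite → {n | ω n = s'}.Infinite := by
  rw [MeasureTheory.ae_iff]
  refine measure_mono_null ?_
    (measure_iUnion_null fun N => myD_inter_null hP0 hP1 hμ s s' hpos N)
  intro ω hω
  rw [Set.mem_setOf_eq, Classical.not_imp] at hω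
  obtain ⟨N, hN⟩ := bad_mem_myD s s' ω hω.1 hω.2
  exact Set.mem_iUnion.mpr ⟨N, Set.mem_iInter.mpr hN⟩
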